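/- For every integer n ≥ 1 and all z: z · (d/dz) P_n(z; β−1, α+1) = n · P_n(z; β−1, α+1) − (n(1+α)/(n−1+β)) · P_{n−1}(z; β−1, α+2). -/

import Mathlib

open Finset

/-- Pochhammer symbol `(a)_k = a (a+1) ⋯ (a+k-1)`. -/
noncomputable def poch (a : ℝ) (k : ℕ) : ℝ := ∏ i ∈ Finset.range k, (a + (i : ℝ))

/-- The Hendriksen–van Rossum polynomial `P_n(z; α, β)`. -/
noncomputable def HR (α β : ℝ) (n : ℕ) (z : ℝ) : ℝ :=
  (poch β n / poch (α + 1) n) *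
    ∑ k ∈ Finset.range (n + 1),
      poch (-(n : ℝ)) k * poch (α + 1) k /
          (poch (1 - β - (n : ℝ)) k * (Nat.factorial k : ℝ)) * z ^ k

/-- `d_m(α,β) = −(m+β)/(m+α+1)`. -/
noncomputable def dco (α β m : ℝ) : ℝ := -(m + β) / (m + α + 1)

/-- `b_m(α,β) = −m(m+α+β)/((m+α)(m+α+1))`. -/
noncomputable def bco (α β m : ℝ) : ℝ := -(m * (m + α + β)) / ((m + α) * (m + α + 1))

lemma poch_succ_right (a : ℝ) (k : ℕ) : poch a (k+1) = poch a k * (a + k) :=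
  Finset.prod_range_succ _ _

lemma poch_succ_left (a : ℝ) (k : ℕ) : poch a (k+1) = a * poch (a+1) k := by
  rw [poch, Finset.prod_range_succ']
  simp only [Nat.cast_zero, add_zero]
  rw [mul_comm, poch]
  congr 1
  apply Finset.prod_congr rfl
  intro i _
  push_cast
  ring

lemma poch_ne_zero {a : ℝ} (k : ℕ) (h : ∀ i : ℕ, i < k → a + i ≠ 0) : poch a k ≠ 0 :=
  Finset.prod_ne_zero_iff.mpr fun i hi => h i (Finset.mem_range.mp hi)

lemma key (a : ℝ) (k : ℕ) : (a - k) * poch (-a) k = a * poch (-(a-1)) k := by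
  induction k with
  | zero => simp [poch]
  | succ k ih =>
    rw [poch_succ_right, poch_succ_right]
    push_cast
    linear_combination ((k:ℝ) + 1 - a) * ih

lemma frac (nn kk al be A B X Y P D F : ℝ)
    (hB : B ≠ 0) (h2 : nn - 1 + be ≠ 0) (hD : D ≠ 0) (hF : F ≠ 0)
    (hkey : (nn - kk) * X = nn * Y) :
    (nn - kk) * ((al+1) * A / (B * (be + (nn-1))) * (X * P / (D * F)))
      = nn * (1 + al) / (nn - 1 + be) * (A / B * (Y * P / (D * F))) := by
  have h3 : be + (nn - 1) ≠ 0 := by intro h; apply h2; linarith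
  field_simp
  linear_combination (al+1)*A*P*(nn-1+be)*hkey

/-- `z · (d/dz) P_n(z; β−1, α+1) = n · P_n(z; β−1, α+1) − (n(1+α)/(n−1+β)) · P_{n−1}(z; β−1, α+2)`
for `n ≥ 1`. -/
theorem stmt5 (α β : ℝ)
    (hα : ∀ m : ℤ, α ≠ (m : ℝ)) (hβ : ∀ m : ℤ, β ≠ (m : ℝ))
    (hαβ : ∀ m : ℤ, α + β ≠ (m : ℝ))
    (n : ℕ) (hn : 1 ≤ n) (z : ℝ) :
    z * deriv (HR (β - 1) (α + 1) n) z
      = (n : ℝ) * HR (β - 1) (α + 1) n z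
        - (n : ℝ) * (1 + α) / ((n : ℝ) - 1 + β) * HR (β - 1) (α + 2) (n - 1) z := by
  have hn1 : ((n-1:ℕ):ℝ) = (n:ℝ) - 1 := by
    rw [Nat.cast_sub hn]; norm_num
  have hrange : n = (n-1) + 1 := (Nat.succ_pred_eq_of_pos hn).symm
  set C : ℝ := poch (α+1) n / poch (β-1+1) n with hCdef
  set c : ℕ → ℝ := fun k =>
    poch (-(n:ℝ)) k * poch (β-1+1) k /
      (poch (1-(α+1)-(n:ℝ)) k * (Nat.factorial k : ℝ)) with hcdef
  set C' : ℝ := poch (α+2) (n-1) / poch (β-1+1) (n-1) with hC'def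
  set c' : ℕ → ℝ := fun k =>
    poch (-((n-1:ℕ):ℝ)) k * poch (β-1+1) k /
      (poch (1-(α+2)-((n-1:ℕ):ℝ)) k * (Nat.factorial k : ℝ)) with hc'def
  set Q : ℝ := (n : ℝ) * (1 + α) / ((n : ℝ) - 1 + β) with hQdef
  have hfun : HR (β-1) (α+1) n = fun z => ∑ k ∈ Finset.range (n+1), (C * c k) * z ^ k := by
    funext w
    rw [HR, Finset.mul_sum]
    exact Finset.sum_congr rfl fun k _ => (mul_assoc _ _ _).symm
  have hlastzero : c' n = 0 := by
    have : poch (-((n-1:ℕ):ℝ)) n = 0 := by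
      apply Finset.prod_eq_zero (Finset.mem_range.mpr (Nat.sub_lt hn one_pos))
      rw [hn1]
      ring
    simp [hc'def, this]
  have h3 : HR (β-1) (α+2) (n-1) z = ∑ k ∈ Finset.range (n+1), (C' * c' k) * z ^ k := by
    rw [HR]
    rw [← hrange, Finset.sum_range_succ (fun k => (C' * c' k) * z ^ k) n]
    rw [hlastzero]
    rw [Finset.mul_sum]
    simp only [mul_zero, zero_mul, add_zero]
    exact Finset.sum_congr rfl fun k _ => (mul_assoc _ _ _).symm
  have hderiv : deriv (HR (β-1) (α+1) n) z
      = ∑ k ∈ Finset.range (n+1), (C * c k) * ((k:ℝ) * z^(k-1)) := by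
    rw [hfun]
    rw [deriv_fun_sum (fun k _ => (differentiableAt_pow k).const_mul _)]
    exact Finset.sum_congr rfl fun k _ => by
      rw [deriv_const_mul_field, deriv_pow_field]
  have hβn : ((n:ℝ) - 1) + β ≠ 0 := by
    intro h
    exact hβ (1 - n) (by push_cast; linarith)
  have h2' : (n:ℝ) - 1 + β ≠ 0 := hβn
  have hB : poch (β-1+1) (n-1) ≠ 0 := by
    apply poch_ne_zero
    intro i _ h
    exact hβ (-i) (by push_cast; linarith)
  have hcoef : ∀ k : ℕ, ((n:ℝ) - k) * (C * c k) = Q * (C' * c' k) := by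
    intro k
    have hD : poch (-α-(n:ℝ)) k ≠ 0 := by
      apply poch_ne_zero
      intro i _ h
      exact hα ((i:ℤ) - n) (by push_cast; linarith)
    have hF : (Nat.factorial k : ℝ) ≠ 0 := Nat.cast_ne_zero.mpr k.factorial_ne_zero
    have hkey : ((n:ℝ) - k) * poch (-(n:ℝ)) k = (n:ℝ) * poch (-((n:ℝ)-1)) k := key (n:ℝ) k
    have e1 : poch (1-(α+1)-(n:ℝ)) k = poch (-α-(n:ℝ)) k := by
      have : 1-(α+1)-(n:ℝ) = -α-(n:ℝ) := by ring
      rw [this]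
    have e2 : poch (1-(α+2)-((n-1:ℕ):ℝ)) k = poch (-α-(n:ℝ)) k := by
      rw [hn1]
      have : 1-(α+2)-((n:ℝ)-1) = -α-(n:ℝ) := by ring
      rw [this]
    have e3 : poch (-((n-1:ℕ):ℝ)) k = poch (-((n:ℝ)-1)) k := by rw [hn1]
    have e4 : poch (α+1) n = (α+1) * poch (α+2) (n-1) := by
      conv_lhs => rw [hrange]
      rw [poch_succ_left]
      have : α+1+1 = α+2 := by ring
      rw [this]
    have e5 : poch (β-1+1) n = poch (β-1+1) (n-1) * (β + ((n:ℝ)-1)) := by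
      conv_lhs => rw [hrange]
      rw [poch_succ_right, hn1]
      ring
    simp only [hcdef, hc'def, hCdef, hC'def, hQdef, e1, e2, e3, e4, e5]
    exact frac (n:ℝ) (k:ℝ) α β _ _ _ _ _ _ _ hB h2' hD hF hkey
  rw [hderiv, congrFun hfun z, h3, Finset.mul_sum, Finset.mul_sum, Finset.mul_sum,
    ← Finset.sum_sub_distrib]
  apply Finset.sum_congr rfl
  intro k _
  have h1 : z * ((C * c k) * ((k:ℝ) * z^(k-1))) = (C * c k) * ((k:ℝ) * z^k) := by
    cases k with
    | zero => simp
    | succ m => rw [Nat.succ_sub_one, pow_succ]; ring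
  rw [h1]
  linear_combination (-(z^k)) * hcoef k
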